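/- For positive integers n and odd d, the number of partitions with perimeter n into d-distinct parts all ≥ (d+3)/2 is at least the number of partitions with perimeter n into parts congruent to ±(d+3)/2 modulo d+3. -/

import Mathlib

/-- A partition: a nonempty, nonincreasing list of positive integers. -/
def IsPartition (l : List ℕ) : Prop :=
  l ≠ [] ∧ l.Pairwise (· ≥ ·) ∧ ∀ x ∈ l, 0 < x

/-- Perimeter: (largest part) + (number of parts) - 1. -/
def perimeter (l : List ℕ) : ℕ := l.headI + l.length - 1

/-- d-distinct: consecutive parts differ by at least d. -/
def DDistinct (d : ℕ) (l : List ℕ) : Prop := l.Chain' (fun x y => y + d ≤ x)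

namespace Stmt9Aux

/-- The `j`-th entry of the image list. -/
def G (n d a m t : ℕ) (l : List ℕ) (j : ℕ) : ℕ :=
  if j = 0 then n - t
  else a + (t - j) * d + List.countP (fun x => decide (a + m * j ≤ x)) l.tail

/-- The injection: from a partition with perimeter `n` into parts `≡ a (mod m)`
to a `d`-distinct partition with perimeter `n` and parts `≥ a`. -/
def phi (n d a m : ℕ) (l : List ℕ) : List ℕ :=
  List.ofFn fun j : Fin ((l.headI - a) / m + 1) => G n d a m ((l.headI - a) / m) l j.1

lemma G_zero (n d a m t : ℕ) (l : List ℕ) : G n d a m t l 0 = n - t := by simp [G]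

lemma G_pos (n d a m t : ℕ) (l : List ℕ) {j : ℕ} (hj : j ≠ 0) :
    G n d a m t l j = a + (t - j) * d +
      List.countP (fun x => decide (a + m * j ≤ x)) l.tail := by simp [G, hj]

lemma countP_split (a m : ℕ) (hm : 0 < m) (c : ℕ) (L : List ℕ)
    (hL : ∀ x ∈ L, ∃ e, x = a + m * e) :
    L.countP (fun x => decide (a + m * c ≤ x)) =
      L.count (a + m * c) + L.countP (fun x => decide (a + m * (c + 1) ≤ x)) := by
  induction L with
  | nil => simp
  | cons x L ih =>
    obtain ⟨e, he⟩ := hL x (by simp)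
    have hrest := ih (fun y hy => hL y (by simp [hy]))
    subst he
    have key : ∀ u v : ℕ, a + m * u ≤ a + m * v ↔ u ≤ v := by
      intro u v
      constructor
      · intro h
        exact Nat.le_of_mul_le_mul_left (Nat.le_of_add_le_add_left h) hm
      · intro h
        exact Nat.add_le_add_left (Nat.mul_le_mul_left m h) a
    have keq : ∀ u v : ℕ, (a + m * u = a + m * v) ↔ u = v := by
      intro u v
      constructor
      · intro h
        exact Nat.eq_of_mul_eq_mul_left hm (Nat.add_left_cancel h)
      · rintro rfl; rfl
    simp only [List.countP_cons, List.count_cons, hrest, decide_eq_true_eq, beq_iff_eq,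
      key, keq]
    rcases Nat.lt_trichotomy e c with h | rfl | h
    · split_ifs <;> omega
    · split_ifs <;> omega
    · split_ifs <;> omega

section Main

variable {n d a m : ℕ} {l : List ℕ}

lemma head_form (hne : l ≠ []) (hcong : ∀ x ∈ l, ∃ c, x = a + m * c) :
    ∃ t, l.headI = a + m * t := by
  apply hcong
  cases l with
  | nil => exact absurd rfl hne
  | cons y ys => simp

lemma phi_eq (hm : 0 < m) {t : ℕ} (ht : l.headI = a + m * t) :
    phi n d a m l = List.ofFn (fun j : Fin (t + 1) => G n d a m t l j.1) := by
  have htq : (l.headI - a) / m = t := by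
    rw [ht, Nat.add_sub_cancel_left, Nat.mul_div_cancel_left _ hm]
  simp only [phi, htq]
  rfl

lemma max_of_sorted (hs : l.Pairwise (· ≥ ·)) : ∀ x ∈ l, x ≤ l.headI := by
  cases l with
  | nil => simp
  | cons y ys =>
    intro x hx
    rcases List.mem_cons.mp hx with rfl | hx
    · simp
    · exact (List.pairwise_cons.mp hs).1 x hx

lemma phi_spec (hd : 0 < d) (hm : m = d + 3) (ha : m = 2 * a)
    (hl : IsPartition l) (hperi : perimeter l = n)
    (hcong : ∀ x ∈ l, ∃ c, x = a + m * c) :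
    IsPartition (phi n d a m l) ∧ perimeter (phi n d a m l) = n ∧
      DDistinct d (phi n d a m l) ∧ ∀ x ∈ phi n d a m l, a ≤ x := by
  obtain ⟨hne, hsort, hpos⟩ := hl
  have hm0 : 0 < m := by omega
  have ha2 : 2 ≤ a := by omega
  obtain ⟨t, ht⟩ := head_form hne hcong
  rw [phi_eq hm0 ht]
  have hk1 : 1 ≤ l.length := List.length_pos_iff.mpr hne
  obtain ⟨w, hw⟩ : ∃ w, m * t = w := ⟨_, rfl⟩
  have hwt : t ≤ w := hw ▸ Nat.le_mul_of_pos_left t hm0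
  have hn' : n + 1 = a + w + l.length := by
    have hp2 : l.headI + l.length - 1 = n := hperi
    rw [ht, hw] at hp2
    omega
  have hcount_le : ∀ j : ℕ,
      List.countP (fun x => decide (a + m * j ≤ x)) l.tail ≤ l.length - 1 := by
    intro j
    have := List.countP_le_length (p := fun x => decide (a + m * j ≤ x)) (l := l.tail)
    rw [List.length_tail] at this
    omega
  have hcount_mono : ∀ i j : ℕ, i ≤ j →
      List.countP (fun x => decide (a + m * j ≤ x)) l.tail ≤
        List.countP (fun x => decide (a + m * i ≤ x)) l.tail := by
    intro i j hij
    apply List.countP_mono_left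
    intro x _ hx
    simp only [decide_eq_true_eq] at hx ⊢
    exact le_trans (Nat.add_le_add_left (Nat.mul_le_mul_left m hij) a) hx
  have hchain : List.Chain' (fun x y => y + d ≤ x)
      (List.ofFn (fun j : Fin (t + 1) => G n d a m t l j.1)) := by
    show List.IsChain _ _
    rw [List.isChain_ofFn]
    intro i hi
    have hit : i + 1 ≤ t := by omega
    show G n d a m t l (i + 1) + d ≤ G n d a m t l i
    rcases Nat.eq_zero_or_pos i with rfl | hipos
    · rw [G_pos n d a m t l (by omega : (0:ℕ) + 1 ≠ 0), G_zero]
      have hc1 := hcount_le (0 + 1)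
      have hvu : t * d = (t - (0 + 1)) * d + d := by
        cases t with
        | zero => omega
        | succ s => simp [Nat.succ_mul]
      have hwv : w = t * d + 3 * t := by rw [← hw, hm]; ring
      obtain ⟨u, hu⟩ : ∃ u, (t - (0 + 1)) * d = u := ⟨_, rfl⟩
      obtain ⟨v, hv⟩ : ∃ v, t * d = v := ⟨_, rfl⟩
      rw [hu] at hvu
      rw [hv] at hvu hwv
      rw [hu]
      omega
    · rw [G_pos n d a m t l (by omega : i + 1 ≠ 0), G_pos n d a m t l (by omega : i ≠ 0)]
      have hmono := hcount_mono i (i + 1) (by omega)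
      have hvu : (t - i) * d = (t - (i + 1)) * d + d := by
        have h1 : t - i = (t - (i + 1)) + 1 := by omega
        rw [h1, Nat.succ_mul]
      obtain ⟨u, hu⟩ : ∃ u, (t - (i + 1)) * d = u := ⟨_, rfl⟩
      obtain ⟨v, hv⟩ : ∃ v, (t - i) * d = v := ⟨_, rfl⟩
      rw [hu, hv] at hvu
      rw [hu, hv]
      omega
  have hge : ∀ x ∈ List.ofFn (fun j : Fin (t + 1) => G n d a m t l j.1), a ≤ x := by
    intro x hx
    rw [List.mem_ofFn] at hx
    obtain ⟨j, rfl⟩ := hx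
    show a ≤ G n d a m t l j.1
    by_cases hj : j.1 = 0
    · rw [hj, G_zero]
      omega
    · rw [G_pos n d a m t l hj]
      exact le_trans (Nat.le_add_right a _) (Nat.le_add_right _ _)
  have hnenil : List.ofFn (fun j : Fin (t + 1) => G n d a m t l j.1) ≠ [] := by
    intro hcon
    have := congrArg List.length hcon
    simp at this
  have hhead : (List.ofFn (fun j : Fin (t + 1) => G n d a m t l j.1)).headI = n - t := by
    rw [List.ofFn_succ, List.headI_cons]
    exact G_zero n d a m t l
  refine ⟨⟨hnenil, ?_, fun x hx => by have := hge x hx; omega⟩, ?_, hchain, hge⟩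
  · exact List.isChain_iff_pairwise.mp (hchain.imp (fun x y h => by omega))
  · show (List.ofFn (fun j : Fin (t + 1) => G n d a m t l j.1)).headI +
      (List.ofFn (fun j : Fin (t + 1) => G n d a m t l j.1)).length - 1 = n
    rw [hhead, List.length_ofFn]
    omega

lemma phi_inj (hd : 0 < d) (hm : m = d + 3) (ha : m = 2 * a)
    {l' : List ℕ}
    (hl : IsPartition l) (hperi : perimeter l = n)
    (hcong : ∀ x ∈ l, ∃ c, x = a + m * c)
    (hl' : IsPartition l') (hperi' : perimeter l' = n)
    (hcong' : ∀ x ∈ l', ∃ c, x = a + m * c)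
    (heq : phi n d a m l = phi n d a m l') : l = l' := by
  obtain ⟨hne, hsort, hpos⟩ := hl
  obtain ⟨hne', hsort', hpos'⟩ := hl'
  have hm0 : 0 < m := by omega
  have ha2 : 2 ≤ a := by omega
  obtain ⟨t, ht⟩ := head_form hne hcong
  obtain ⟨t', ht'⟩ := head_form hne' hcong'
  rw [phi_eq hm0 ht, phi_eq hm0 ht'] at heq
  have hlen := congrArg List.length heq
  simp only [List.length_ofFn] at hlen
  have htt : t = t' := by omega
  subst htt
  rw [List.ofFn_inj] at heq
  have hk1 : 1 ≤ l.length := List.length_pos_iff.mpr hne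
  have hk1' : 1 ≤ l'.length := List.length_pos_iff.mpr hne'
  obtain ⟨w, hw⟩ : ∃ w, m * t = w := ⟨_, rfl⟩
  have hn1 : n + 1 = a + w + l.length := by
    have hp2 : l.headI + l.length - 1 = n := hperi
    rw [ht, hw] at hp2
    omega
  have hn2 : n + 1 = a + w + l'.length := by
    have hp2 : l'.headI + l'.length - 1 = n := hperi'
    rw [ht', hw] at hp2
    omega
  have hklen : l.length = l'.length := by omega
  have hHall : ∀ j : ℕ,
      List.countP (fun x => decide (a + m * j ≤ x)) l.tail =
        List.countP (fun x => decide (a + m * j ≤ x)) l'.tail := by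
    intro j
    rcases Nat.eq_zero_or_pos j with rfl | hj0
    · have e1 : List.countP (fun x => decide (a + m * 0 ≤ x)) l.tail = l.tail.length := by
        rw [List.countP_eq_length]
        intro x hx
        obtain ⟨c, rfl⟩ := hcong x (List.mem_of_mem_tail hx)
        simpa using Nat.le_add_right a (m * c)
      have e2 : List.countP (fun x => decide (a + m * 0 ≤ x)) l'.tail = l'.tail.length := by
        rw [List.countP_eq_length]
        intro x hx
        obtain ⟨c, rfl⟩ := hcong' x (List.mem_of_mem_tail hx)
        simpa using Nat.le_add_right a (m * c)
      rw [e1, e2, List.length_tail, List.length_tail, hklen]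
    rcases Nat.lt_or_ge t j with hjt | hjt
    · have key : ∀ (L : List ℕ), (∀ x ∈ L, x ≤ a + m * t) →
          List.countP (fun x => decide (a + m * j ≤ x)) L = 0 := by
        intro L hL
        rw [List.countP_eq_zero]
        intro x hx
        simp only [decide_eq_true_eq]
        have hxle := hL x hx
        have h1 : m * (t + 1) ≤ m * j := Nat.mul_le_mul_left m (by omega)
        have h2 : m * (t + 1) = m * t + m := Nat.mul_succ m t
        obtain ⟨u, hu⟩ : ∃ u, m * t = u := ⟨_, rfl⟩
        obtain ⟨v, hv⟩ : ∃ v, m * j = v := ⟨_, rfl⟩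
        rw [h2, hu, hv] at h1
        rw [hu] at hxle
        rw [hv]
        omega
      rw [key l.tail (fun x hx => ht ▸ max_of_sorted hsort x (List.mem_of_mem_tail hx)),
        key l'.tail (fun x hx => ht' ▸ max_of_sorted hsort' x (List.mem_of_mem_tail hx))]
    · have hfun : G n d a m t l j = G n d a m t l' j :=
        congrFun heq ⟨j, by omega⟩
      rw [G_pos n d a m t l (by omega : j ≠ 0), G_pos n d a m t l' (by omega : j ≠ 0)]
        at hfun
      obtain ⟨u, hu⟩ : ∃ u, (t - j) * d = u := ⟨_, rfl⟩
      rw [hu] at hfun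
      omega
  have htails : l.tail = l'.tail := by
    have hperm : l.tail.Perm l'.tail := by
      rw [List.perm_iff_count]
      intro x
      by_cases hex : ∃ c, x = a + m * c
      · obtain ⟨c, rfl⟩ := hex
        have s1 := countP_split a m hm0 c l.tail
          (fun y hy => hcong y (List.mem_of_mem_tail hy))
        have s2 := countP_split a m hm0 c l'.tail
          (fun y hy => hcong' y (List.mem_of_mem_tail hy))
        have g1 := hHall c
        have g2 := hHall (c + 1)
        omega
      · have e1 : l.tail.count x = 0 := by
          rw [List.count_eq_zero]
          intro hx
          exact hex (hcong x (List.mem_of_mem_tail hx))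
        have e2 : l'.tail.count x = 0 := by
          rw [List.count_eq_zero]
          intro hx
          exact hex (hcong' x (List.mem_of_mem_tail hx))
        rw [e1, e2]
    haveI : IsAntisymm ℕ (· ≥ ·) := ⟨fun _ _ h1 h2 => le_antisymm h2 h1⟩
    exact List.Perm.eq_of_pairwise (fun _ _ _ _ h1 h2 => le_antisymm h2 h1) hsort.tail hsort'.tail hperm
  cases l with
  | nil => exact absurd rfl hne
  | cons y ys =>
    cases l' with
    | nil => exact absurd rfl hne'
    | cons y' ys' =>
      simp only [List.headI_cons] at ht ht'
      simp only [List.tail_cons] at htails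
      rw [ht, ht', htails]

end Main

lemma finite_aux (N M : ℕ) : {l : List ℕ | l.length ≤ N ∧ ∀ x ∈ l, x ≤ M}.Finite := by
  induction N with
  | zero =>
    apply Set.Finite.subset (Set.finite_singleton ([] : List ℕ))
    rintro l ⟨hlen, -⟩
    simp only [Set.mem_singleton_iff]
    exact List.length_eq_zero_iff.mp (by omega)
  | succ N ih =>
    apply Set.Finite.subset
      (Set.Finite.insert []
        (((Set.finite_Iic M).prod ih).image fun p : ℕ × List ℕ => p.1 :: p.2))
    rintro l ⟨hlen, hmem⟩
    cases l with
    | nil => exact Set.mem_insert _ _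
    | cons x xs =>
      apply Set.mem_insert_of_mem
      refine ⟨⟨x, xs⟩, ⟨?_, ?_, ?_⟩, rfl⟩
      · exact hmem x (by simp)
      · simpa using hlen
      · exact fun y hy => hmem y (by simp [hy])

end Stmt9Aux

open Stmt9Aux

theorem stmt9 (n d : ℕ) (hn : 0 < n) (hd : 0 < d) (hodd : Odd d) :
    Nat.card {l : List ℕ // IsPartition l ∧ perimeter l = n ∧
        ∀ x ∈ l, x % (d + 3) = ((d + 3) / 2) % (d + 3) ∨ (x + (d + 3) / 2) % (d + 3) = 0}
      ≤ Nat.card {l : List ℕ // IsPartition l ∧ perimeter l = n ∧ DDistinct d l ∧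
          ∀ x ∈ l, (d + 3) / 2 ≤ x} := by
  set a := (d + 3) / 2 with haa
  obtain ⟨e, he⟩ := hodd
  have ha : d + 3 = 2 * a := by omega
  have ha2 : 2 ≤ a := by omega
  have hform : ∀ x : ℕ, 0 < x →
      (x % (d + 3) = a % (d + 3) ∨ (x + a) % (d + 3) = 0) → ∃ c, x = a + (d + 3) * c := by
    intro x hx h
    have ham : a % (d + 3) = a := Nat.mod_eq_of_lt (by omega)
    rcases h with h | h
    · rw [ham] at h
      have hda := Nat.div_add_mod x (d + 3)
      rw [h] at hda
      refine ⟨x / (d + 3), ?_⟩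
      obtain ⟨q, hq⟩ : ∃ q, (d + 3) * (x / (d + 3)) = q := ⟨_, rfl⟩
      rw [hq] at hda ⊢
      omega
    · obtain ⟨q, hq⟩ := Nat.dvd_of_mod_eq_zero h
      rcases q with _ | q'
      · simp at hq
        omega
      · refine ⟨q', ?_⟩
        have hq2 : (d + 3) * (q' + 1) = (d + 3) * q' + (d + 3) := by ring
        rw [hq2] at hq
        obtain ⟨w, hw⟩ : ∃ w, (d + 3) * q' = w := ⟨_, rfl⟩
        rw [hw] at hq ⊢
        omega
  have hfin : {l : List ℕ | IsPartition l ∧ perimeter l = n ∧ DDistinct d l ∧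
      ∀ x ∈ l, a ≤ x}.Finite := by
    apply (finite_aux n n).subset
    rintro l ⟨⟨hne, hsort, hpos⟩, hperi, -, -⟩
    have hk1 : 1 ≤ l.length := List.length_pos_iff.mpr hne
    have hh1 : 1 ≤ l.headI := by
      apply hpos
      cases l with
      | nil => exact absurd rfl hne
      | cons y ys => simp
    have hperi' : l.headI + l.length - 1 = n := hperi
    constructor
    · omega
    · intro x hx
      have := max_of_sorted hsort x hx
      omega
  haveI : Finite {l : List ℕ // IsPartition l ∧ perimeter l = n ∧ DDistinct d l ∧
      ∀ x ∈ l, a ≤ x} := hfin.to_subtype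
  apply Nat.card_le_card_of_injective
    (f := fun x : {l : List ℕ // IsPartition l ∧ perimeter l = n ∧
        ∀ x ∈ l, x % (d + 3) = a % (d + 3) ∨ (x + a) % (d + 3) = 0} =>
      (⟨phi n d a (d + 3) x.1, by
        obtain ⟨l, hl, hperi, hc⟩ := x
        exact phi_spec hd rfl ha hl hperi
          (fun y hy => hform y (hl.2.2 y hy) (hc y hy))⟩ :
        {l : List ℕ // IsPartition l ∧ perimeter l = n ∧ DDistinct d l ∧
          ∀ x ∈ l, a ≤ x}))
  rintro ⟨l, hl, hperi, hc⟩ ⟨l', hl', hperi', hc'⟩ hxy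
  simp only [Subtype.mk.injEq] at hxy ⊢
  exact phi_inj hd rfl ha hl hperi
    (fun y hy => hform y (hl.2.2 y hy) (hc y hy)) hl' hperi'
    (fun y hy => hform y (hl'.2.2 y hy) (hc' y hy)) hxy
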